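/- The little-endian two's complement integer encoding functions are mutually inverse: (1) decoding the encoding of x yields x, and the encoding of x has length equal to the byte size times bits per byte, provided x is in the representable range of the integer type; (2) encoding the decoding of a bit list β of the right length yields β, and the decoded value is in the representable range. -/

import Mathlib

/-- The natural number denoted by a little-endian list of bits. -/
def natOfBits (bs : List Bool) : ℕ :=
  bs.foldr (fun b acc => (if b then 1 else 0) + 2 * acc) 0

lemma natOfBits_lt (bs : List Bool) : natOfBits bs < 2 ^ bs.length := by
  induction bs with
  | nil => simp [natOfBits]
  | cons b t ih =>
    simp only [natOfBits, List.foldr_cons, List.length_cons, pow_succ] at *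
    cases b <;> simp <;> omega

lemma mod_pow_two_succ (m n : ℕ) : m % 2 ^ (n+1) = m % 2 + 2 * (m / 2 % 2 ^ n) := by
  have h1 : (2 * (m / 2)) % (2 * 2 ^ n) = 2 * (m / 2 % 2 ^ n) := Nat.mul_mod_mul_left _ _ _
  have h2 : m % 2 + 2 * (m / 2) = m := Nat.mod_add_div m 2
  have h3 : m % 2 + 2 * (m / 2 % 2 ^ n) < 2 * 2 ^ n := by
    have := m.mod_lt (y := 2) (by norm_num)
    have := Nat.mod_lt (m / 2) (y := 2 ^ n) (Nat.two_pow_pos n)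
    omega
  calc m % 2 ^ (n+1) = (m % 2 + 2 * (m / 2)) % (2 * 2 ^ n) := by rw [h2]; ring_nf
    _ = (m % 2 % (2 * 2^n) + (2 * (m / 2)) % (2 * 2 ^ n)) % (2 * 2 ^ n) := by rw [← Nat.add_mod]
    _ = (m % 2 + 2 * (m / 2 % 2 ^ n)) % (2 * 2 ^ n) := by
        have h4 : m % 2 % (2 * 2 ^ n) = m % 2 := Nat.mod_eq_of_lt (by have := m.mod_lt (y := 2) (by norm_num); have : (1:ℕ) ≤ 2^n := Nat.one_le_two_pow; omega)
        rw [h1, h4]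
    _ = m % 2 + 2 * (m / 2 % 2 ^ n) := Nat.mod_eq_of_lt h3

lemma natOfBits_range_map (n m : ℕ) :
    natOfBits ((List.range n).map m.testBit) = m % 2 ^ n := by
  induction n generalizing m with
  | zero => simp [natOfBits, Nat.mod_one]
  | succ n ih =>
    rw [List.range_succ_eq_map]
    simp only [List.map_cons, List.map_map, natOfBits, List.foldr_cons]
    have : ((List.range n).map (m.testBit ∘ Nat.succ)) = (List.range n).map (m/2).testBit := by
      apply List.map_congr_left; intro i _; simp [Function.comp, Nat.testBit_succ]
    rw [show List.foldr (fun b acc => (if b then 1 else 0) + 2 * acc) 0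
          ((List.range n).map (m.testBit ∘ Nat.succ)) =
        natOfBits ((List.range n).map (m/2).testBit) by rw [← this]; rfl, ih]
    rw [mod_pow_two_succ]
    have : m.testBit 0 = decide (m % 2 = 1) := Nat.testBit_zero m
    rcases Nat.mod_two_eq_zero_or_one m with h | h <;> simp [this, h]

lemma testBit_natOfBits (bs : List Bool) (i : ℕ) :
    (natOfBits bs).testBit i = bs.getD i false := by
  induction bs generalizing i with
  | nil => simp [natOfBits]
  | cons b t ih =>
    cases i with
    | zero =>
      simp only [natOfBits, List.foldr_cons, List.getD_cons_zero]
      rw [Nat.testBit_zero]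
      cases b <;> simp <;> omega
    | succ i =>
      simp only [natOfBits, List.foldr_cons, List.getD_cons_succ]
      rw [Nat.testBit_succ]
      have : ((if b then 1 else 0) + 2 * natOfBits t) / 2 = natOfBits t := by
        cases b <;> simp <;> omega
      show (((if b then 1 else 0) + 2 * natOfBits t) / 2).testBit i = _
      rw [this, ih]

/-- The `n`-bit little-endian two's complement encoding of an integer. -/
def toBits (n : ℕ) (x : ℤ) : List Bool :=
  (List.range n).map (fun i => ((x % (2 ^ n : ℤ)).toNat).testBit i)

/-- Decoding a little-endian bit list as a (signed or unsigned) integer;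
for signed types values `≥ 2^(n-1)` are shifted down by `2^n`. -/
def ofBits (si : Bool) (bs : List Bool) : ℤ :=
  if si = true ∧ 2 ^ (bs.length - 1) ≤ natOfBits bs then
    (natOfBits bs : ℤ) - 2 ^ bs.length
  else (natOfBits bs : ℤ)

/-- The representable range of an `n`-bit integer type with signedness `si`. -/
def inRange (si : Bool) (n : ℕ) (x : ℤ) : Prop :=
  if si = true then -(2 ^ (n - 1) : ℤ) ≤ x ∧ x < 2 ^ (n - 1)
  else 0 ≤ x ∧ x < 2 ^ n

lemma toBits_eq_of_emod (n : ℕ) (x : ℤ) (bs : List Bool) (hlen : bs.length = n)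
    (h : x % (2 ^ n : ℤ) = (natOfBits bs : ℤ)) : toBits n x = bs := by
  have hm : (x % (2 ^ n : ℤ)).toNat = natOfBits bs := by rw [h]; exact Int.toNat_natCast _
  apply List.ext_getElem
  · simp [toBits, hlen]
  · intro i h1 h2
    simp only [toBits, List.getElem_map, List.getElem_range, hm, testBit_natOfBits]
    exact List.getD_eq_getElem bs false h2

lemma emod_two_pow_eq (n : ℕ) (x : ℤ) (N : ℕ) (hN : N < 2 ^ n)
    (hx : x = (N : ℤ) ∨ x = (N : ℤ) - 2 ^ n) : x % (2 ^ n : ℤ) = (N : ℤ) := by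
  have hpos : (0:ℤ) < 2 ^ n := by positivity
  have hNlt : (N : ℤ) < 2 ^ n := by exact_mod_cast hN
  rcases hx with rfl | rfl
  · exact Int.emod_eq_of_lt (by positivity) hNlt
  · rw [Int.sub_emod, Int.emod_self, sub_zero, Int.emod_emod_of_dvd _ dvd_rfl]
    exact Int.emod_eq_of_lt (by positivity) hNlt

lemma main_aux (n : ℕ) (hn : 1 ≤ n) (si : Bool) :
    (∀ x : ℤ, inRange si n x →
      ofBits si (toBits n x) = x ∧ (toBits n x).length = n) ∧
    (∀ β : List Bool, β.length = n →
      toBits n (ofBits si β) = β ∧ inRange si n (ofBits si β)) := by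
  have ecast1 : (((2:ℕ)^(n-1) : ℕ) : ℤ) = (2:ℤ)^(n-1) := by push_cast; ring
  have ecast2 : (((2:ℕ)^n : ℕ) : ℤ) = (2:ℤ)^n := by push_cast; ring
  have e1 : (2:ℤ)^n = 2 * (2:ℤ)^(n-1) := by
    rw [← pow_succ']; congr 1; omega
  have hPpos : (1:ℤ) ≤ (2:ℤ)^(n-1) := by have := Nat.one_le_two_pow (n := n-1); omega
  have hpos : (0:ℤ) < 2 ^ n := by positivity
  constructor
  · intro x hx
    have hlen : (toBits n x).length = n := by simp [toBits]
    refine ⟨?_, hlen⟩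
    have hge := Int.emod_nonneg x (show (2:ℤ)^n ≠ 0 by positivity)
    have hlt := Int.emod_lt_of_pos x hpos
    have hmltN : (x % ((2:ℤ)^n)).toNat < 2^n := by omega
    have hnat : natOfBits (toBits n x) = (x % ((2:ℤ)^n)).toNat := by
      rw [toBits, natOfBits_range_map, Nat.mod_eq_of_lt hmltN]
    have hmZ : ((x % ((2:ℤ)^n)).toNat : ℤ) = x % ((2:ℤ)^n) := Int.toNat_of_nonneg hge
    rw [ofBits, hnat, hlen]
    cases si with
    | false =>
      simp only [inRange, Bool.false_eq_true, if_false] at hx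
      have hxx : x % ((2:ℤ)^n) = x := Int.emod_eq_of_lt hx.1 hx.2
      rw [if_neg (by simp)]
      omega
    | true =>
      simp only [inRange, if_pos rfl] at hx
      obtain ⟨hx1, hx2⟩ := hx
      rcases le_or_gt 0 x with h0 | h0
      · have hxx : x % ((2:ℤ)^n) = x := Int.emod_eq_of_lt h0 (by omega)
        have hcond : ¬ 2 ^ (n-1) ≤ (x % ((2:ℤ)^n)).toNat := by
          intro hc
          have hc' : (((2:ℕ)^(n-1) : ℕ) : ℤ) ≤ (((x % ((2:ℤ)^n)).toNat : ℕ) : ℤ) :=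
            Int.ofNat_le.mpr hc
          omega
        rw [if_neg (fun h => hcond h.2)]
        omega
      · have hxx : x % ((2:ℤ)^n) = x + 2^n := by
          have h' : (x + 2^n) % ((2:ℤ)^n) = x % ((2:ℤ)^n) := by
            simp [Int.add_mul_emod_self_left]
          rw [← h']
          exact Int.emod_eq_of_lt (by omega) (by omega)
        have hcond : 2 ^ (n-1) ≤ (x % ((2:ℤ)^n)).toNat := by
          have hc' : (((2:ℕ)^(n-1) : ℕ) : ℤ) ≤ (((x % ((2:ℤ)^n)).toNat : ℕ) : ℤ) := by omega
          exact_mod_cast hc'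
        rw [if_pos ⟨rfl, hcond⟩]
        omega
  · intro β hβ
    set N := natOfBits β with hNdef
    have hNlt : N < 2 ^ n := hβ ▸ natOfBits_lt β
    have hNltZ : ((N:ℕ) : ℤ) < (((2:ℕ)^n : ℕ) : ℤ) := Int.ofNat_lt.mpr hNlt
    have hof : ofBits si β = if si = true ∧ 2 ^ (n-1) ≤ N then (N:ℤ) - 2^n else (N:ℤ) := by
      rw [ofBits, hβ]
    have hdisj : ofBits si β = (N:ℤ) ∨ ofBits si β = (N:ℤ) - 2^n := by
      rw [hof]; split
      exacts [Or.inr rfl, Or.inl rfl]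
    have hmod : ofBits si β % ((2:ℤ)^n) = (N:ℤ) := emod_two_pow_eq n _ N hNlt (by tauto)
    refine ⟨toBits_eq_of_emod n _ β hβ hmod, ?_⟩
    cases si with
    | false =>
      rw [hof, if_neg (by simp)]
      simp only [inRange, Bool.false_eq_true, if_false]
      constructor
      · positivity
      · omega
    | true =>
      by_cases hc : 2 ^ (n-1) ≤ N
      · rw [hof, if_pos ⟨rfl, hc⟩]
        simp only [inRange, if_pos rfl]
        have hc' : (((2:ℕ)^(n-1) : ℕ) : ℤ) ≤ ((N:ℕ) : ℤ) := Int.ofNat_le.mpr hc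
        constructor <;> omega
      · rw [hof, if_neg (fun h => hc h.2)]
        simp only [inRange, if_pos rfl]
        have hc' : ((N:ℕ) : ℤ) < (((2:ℕ)^(n-1) : ℕ) : ℤ) := Int.ofNat_lt.mpr (Nat.lt_of_not_le hc)
        constructor <;> omega

/-- The little-endian two's complement integer encoding functions are mutually
inverse, for bit width `n = charbits * ranksize k` with `charbits ≥ 8` and
`ranksize k ≥ 1`. -/
theorem int_encode_decode_inverse (charbits ranksize : ℕ)
    (hc : 8 ≤ charbits) (hr : 1 ≤ ranksize) (si : Bool) :
    (∀ x : ℤ, inRange si (charbits * ranksize) x →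
      ofBits si (toBits (charbits * ranksize) x) = x ∧
      (toBits (charbits * ranksize) x).length = charbits * ranksize) ∧
    (∀ β : List Bool, β.length = charbits * ranksize →
      toBits (charbits * ranksize) (ofBits si β) = β ∧
      inRange si (charbits * ranksize) (ofBits si β)) :=
  main_aux _ (by have := Nat.mul_le_mul hc hr; omega) si
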